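/- arXiv:1711.07567 — 3 statements merged into one kernel-verified Lean document; each statement's English description precedes it below -/
import Mathlib

section
/- Let n ≥ 16, let G = ([n], E) be a simple undirected graph, let S, V ⊆ [n] be disjoint with m(S,V) > 0, and let m̃ > 0. Consider the procedure CheckEstimate(S, V, m̃): for each i = 0, 1, …, ⌊log n⌋ (independently across iterations), sample S'_i ⊆ S by including each vertex of S independently with probability min(2^i/m̃, 1) and sample V'_i ⊆ V by including each vertex of V independently with probability 1/2^i, and accept if m(S'_i, V'_i) ≠ 0 for some i. If m̃ ≥ 4·m(S,V)·(log n + 1), then CheckEstimate(S, V, m̃) accepts with probability at most 1/4. -/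
open MeasureTheory Finset
open scoped ENNReal NNReal

/- `mSV G S V` is the number of edges of `G` with one endpoint in `S` and the
other in `V` (for disjoint `S`, `V`). -/
open scoped Classical in
noncomputable def mSV {n : ℕ} (G : SimpleGraph (Fin n)) (S V : Finset (Fin n)) : ℕ :=
  (Finset.univ.filter fun p : Fin n × Fin n => G.Adj p.1 p.2 ∧ p.1 ∈ S ∧ p.2 ∈ V).card

/-- Bernoulli measure on `Bool` with success probability `min p 1`. -/
noncomputable def bern (p : ℝ≥0∞) : Measure Bool :=
  (PMF.bernoulli (min p 1).toNNReal
    (by simpa using ENNReal.toNNReal_mono ENNReal.one_ne_top (min_le_right p 1))).toMeasure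

/-- `n` independent Bernoulli(`min p 1`) bits. -/
noncomputable def bits (n : ℕ) (p : ℝ≥0∞) : Measure (Fin n → Bool) :=
  Measure.pi fun _ => bern p

/- The randomness of one iteration `i` of `CheckEstimate` with guess `mt`:
independently include each vertex in the `S`-side sample with probability
`min(2^i/mt, 1)` and in the `V`-side sample with probability `1/2^i`. -/
noncomputable def pairM (n : ℕ) (mt : ℝ) (i : ℕ) :
    Measure ((Fin n → Bool) × (Fin n → Bool)) :=
  (bits n (ENNReal.ofReal (2 ^ i / mt))).prod (bits n ((2 ^ i : ℝ≥0∞))⁻¹)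

/-- The random subset of `S` selected by the inclusion indicators `σ`. -/
def sub {n : ℕ} (S : Finset (Fin n)) (σ : Fin n → Bool) : Finset (Fin n) :=
  S.filter fun v => σ v = true

/- The randomness of a full run of `CheckEstimate(S, V, mt)`: one independent
sampling pair for each iteration `i = 0, 1, …, ⌊log₂ n⌋`. -/
noncomputable def ceM (n : ℕ) (mt : ℝ) :
    Measure (Fin (Nat.log 2 n + 1) → (Fin n → Bool) × (Fin n → Bool)) :=
  Measure.pi fun i => pairM n mt (i : ℕ)

/-- `CheckEstimate(S, V, mt)` accepts on randomness `ω` iff for some iteration `i`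
the sampled pair `(S'_i, V'_i)` has an edge between its sides. -/
def ceAccepts {n : ℕ} (G : SimpleGraph (Fin n)) (S V : Finset (Fin n))
    (ω : Fin (Nat.log 2 n + 1) → (Fin n → Bool) × (Fin n → Bool)) : Prop :=
  ∃ i, mSV G (sub S (ω i).1) (sub V (ω i).2) ≠ 0

instance bern.isProb (p : ℝ≥0∞) : IsProbabilityMeasure (bern p) := by
  unfold bern; infer_instance

instance bits.isProb (n : ℕ) (p : ℝ≥0∞) : IsProbabilityMeasure (bits n p) := by
  unfold bits; infer_instance

instance pairM.isProb (n : ℕ) (mt : ℝ) (i : ℕ) : IsProbabilityMeasure (pairM n mt i) := by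
  unfold pairM; infer_instance

lemma bern_true (p : ℝ≥0∞) : bern p {true} ≤ p := by
  rw [bern, PMF.toMeasure_apply_singleton _ _ (measurableSet_singleton _)]
  refine le_trans (le_of_eq (PMF.bernoulli_apply (b := true) _)) ?_
  simp only [cond_true]
  rw [ENNReal.coe_toNNReal (ne_top_of_le_ne_top ENNReal.one_ne_top (min_le_right p 1))]
  exact min_le_left p 1

lemma bits_true (n : ℕ) (p : ℝ≥0∞) (u : Fin n) :
    bits n p {σ | σ u = true} ≤ p := by
  have hset : {σ : Fin n → Bool | σ u = true} =
      Set.pi Set.univ (fun j => if j = u then ({true} : Set Bool) else Set.univ) := by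
    ext σ
    simp only [Set.mem_setOf_eq, Set.mem_pi, Set.mem_univ, forall_true_left]
    constructor
    · intro h j; by_cases hj : j = u <;> simp [hj, h]
    · intro h; have := h u; simpa using this
  rw [hset, bits, Measure.pi_pi]
  have : ∀ j : Fin n, bern p (if j = u then ({true} : Set Bool) else Set.univ)
      = if j = u then bern p {true} else 1 := by
    intro j; by_cases hj : j = u
    · simp [hj]
    · rw [if_neg hj, if_neg hj]; exact measure_univ
  simp only [this, Finset.prod_ite_eq' Finset.univ u (fun _ => bern p {true}),
    Finset.mem_univ, if_true]
  exact bern_true p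

lemma pair_cyl (n : ℕ) (mt : ℝ) (hmt : 0 < mt) (i : ℕ) (u v : Fin n) :
    pairM n mt i {p | p.1 u = true ∧ p.2 v = true} ≤ (ENNReal.ofReal mt)⁻¹ := by
  have hset : {p : (Fin n → Bool) × (Fin n → Bool) | p.1 u = true ∧ p.2 v = true}
      = {σ | σ u = true} ×ˢ {τ | τ v = true} := by
    ext p; simp [Set.mem_prod]
  rw [pairM, hset, Measure.prod_prod]
  calc bits n (ENNReal.ofReal (2 ^ i / mt)) {σ | σ u = true} *
        bits n ((2 ^ i : ℝ≥0∞))⁻¹ {τ | τ v = true}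
      ≤ ENNReal.ofReal (2 ^ i / mt) * ((2 ^ i : ℝ≥0∞))⁻¹ :=
        mul_le_mul' (bits_true _ _ _) (bits_true _ _ _)
    _ = (ENNReal.ofReal mt)⁻¹ := by
        rw [ENNReal.ofReal_div_of_pos hmt, div_eq_mul_inv]
        have h2 : ENNReal.ofReal ((2:ℝ) ^ i) = 2 ^ i := by
          rw [ENNReal.ofReal_pow (by norm_num)]; norm_num
        rw [h2, mul_comm ((2:ℝ≥0∞) ^ i), mul_assoc,
          ENNReal.mul_inv_cancel (pow_ne_zero _ two_ne_zero) (by simp), mul_one]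

open scoped Classical in
lemma iter_bound (n : ℕ) (mt : ℝ) (hmt : 0 < mt) (G : SimpleGraph (Fin n))
    (S V : Finset (Fin n)) (i : ℕ) :
    pairM n mt i {p | mSV G (sub S p.1) (sub V p.2) ≠ 0}
      ≤ (mSV G S V : ℝ≥0∞) * (ENNReal.ofReal mt)⁻¹ := by
  set E := (Finset.univ.filter fun q : Fin n × Fin n => G.Adj q.1 q.2 ∧ q.1 ∈ S ∧ q.2 ∈ V)
    with hE
  have hsub : {p : (Fin n → Bool) × (Fin n → Bool) | mSV G (sub S p.1) (sub V p.2) ≠ 0} ⊆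
      ⋃ e ∈ E, {p : (Fin n → Bool) × (Fin n → Bool) | p.1 e.1 = true ∧ p.2 e.2 = true} := by
    intro p hp
    simp only [Set.mem_setOf_eq, mSV] at hp
    obtain ⟨q, hq⟩ := Finset.card_ne_zero.mp hp
    simp only [Finset.mem_filter, Finset.mem_univ, true_and, sub] at hq
    obtain ⟨hadj, ⟨hq1S, hq1⟩, ⟨hq2V, hq2⟩⟩ := hq
    refine Set.mem_biUnion (show q ∈ E by simp [hE, hadj, hq1S, hq2V]) ?_
    exact ⟨hq1, hq2⟩
  calc pairM n mt i {p | mSV G (sub S p.1) (sub V p.2) ≠ 0}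
      ≤ ∑ e ∈ E, pairM n mt i {p : (Fin n → Bool) × (Fin n → Bool) |
          p.1 e.1 = true ∧ p.2 e.2 = true} :=
        le_trans (measure_mono hsub) (measure_biUnion_finset_le E _)
    _ ≤ ∑ _e ∈ E, (ENNReal.ofReal mt)⁻¹ :=
        Finset.sum_le_sum fun e _ => pair_cyl n mt hmt i e.1 e.2
    _ = (mSV G S V : ℝ≥0∞) * (ENNReal.ofReal mt)⁻¹ := by
        rw [Finset.sum_const, nsmul_eq_mul]; rfl

lemma ceM_eval (n : ℕ) (mt : ℝ) (i : Fin (Nat.log 2 n + 1))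
    (B : Set ((Fin n → Bool) × (Fin n → Bool))) :
    ceM n mt ((fun ω => ω i) ⁻¹' B) = pairM n mt (i : ℕ) B := by
  have hset : (fun ω : Fin (Nat.log 2 n + 1) → (Fin n → Bool) × (Fin n → Bool) => ω i) ⁻¹' B =
      Set.pi Set.univ (fun j => if j = i then B else Set.univ) := by
    ext ω
    simp only [Set.mem_preimage, Set.mem_pi, Set.mem_univ, forall_true_left]
    constructor
    · intro h j; by_cases hj : j = i <;> simp [hj, h]
    · intro h; have := h i; simpa using this
  rw [ceM, hset, Measure.pi_pi]
  have key : ∀ j : Fin (Nat.log 2 n + 1), pairM n mt (j : ℕ) (if j = i then B else Set.univ)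
      = if j = i then pairM n mt (i : ℕ) B else 1 := by
    intro j; by_cases hj : j = i
    · simp [hj]
    · rw [if_neg hj, if_neg hj]; exact measure_univ
  rw [Finset.prod_congr rfl fun j _ => key j]
  simp

/-- Let `n ≥ 16`, let `S, V ⊆ [n]` be disjoint with `m(S,V) > 0`, and
let `m̃ > 0`. If `m̃ ≥ 4·m(S,V)·(log₂ n + 1)`, then `CheckEstimate(S, V, m̃)` accepts
with probability at most `1/4`. -/
theorem stmt9 (n : ℕ) (hn : 16 ≤ n) (G : SimpleGraph (Fin n)) (S V : Finset (Fin n))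
    (hSV : Disjoint S V) (hm : 0 < mSV G S V) (mt : ℝ) (hmt : 0 < mt)
    (h : 4 * (mSV G S V : ℝ) * (Real.logb 2 n + 1) ≤ mt) :
    ceM n mt {ω | ceAccepts G S V ω} ≤ 1 / 4 := by
  classical
  set m := mSV G S V with hm'
  set B : Set ((Fin n → Bool) × (Fin n → Bool)) :=
    {p | mSV G (sub S p.1) (sub V p.2) ≠ 0} with hB
  have hunion : {ω | ceAccepts G S V ω} =
      ⋃ i : Fin (Nat.log 2 n + 1), (fun ω => ω i) ⁻¹' B := by
    ext ω; simp [ceAccepts, hB, Set.mem_iUnion]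
  rw [hunion]
  have key : ∀ i : Fin (Nat.log 2 n + 1),
      ceM n mt ((fun ω => ω i) ⁻¹' B) ≤ (m : ℝ≥0∞) * (ENNReal.ofReal mt)⁻¹ := by
    intro i
    rw [ceM_eval]
    exact iter_bound n mt hmt G S V i
  calc ceM n mt (⋃ i : Fin (Nat.log 2 n + 1), (fun ω => ω i) ⁻¹' B)
      ≤ ∑' i : Fin (Nat.log 2 n + 1), ceM n mt ((fun ω => ω i) ⁻¹' B) :=
        measure_iUnion_le _
    _ = ∑ i : Fin (Nat.log 2 n + 1), ceM n mt ((fun ω => ω i) ⁻¹' B) := tsum_fintype _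
    _ ≤ ∑ _i : Fin (Nat.log 2 n + 1), (m : ℝ≥0∞) * (ENNReal.ofReal mt)⁻¹ :=
        Finset.sum_le_sum fun i _ => key i
    _ = ((Nat.log 2 n + 1 : ℕ) : ℝ≥0∞) * ((m : ℝ≥0∞) * (ENNReal.ofReal mt)⁻¹) := by
        rw [Finset.sum_const, Finset.card_univ, Fintype.card_fin, nsmul_eq_mul]
    _ ≤ 1 / 4 := by
        set N : ℕ := Nat.log 2 n + 1 with hN
        rw [← mul_assoc, ← div_eq_mul_inv,
          ENNReal.div_le_iff (by simp [ENNReal.ofReal_pos, hmt]) ENNReal.ofReal_ne_top]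
        have hq : (1 / 4 : ℝ≥0∞) * ENNReal.ofReal mt = ENNReal.ofReal (1 / 4 * mt) := by
          rw [ENNReal.ofReal_mul (by norm_num)]
          congr 1
          rw [show (1/4 : ℝ) = ((1:ℝ≥0∞)/4).toReal by simp [ENNReal.toReal_div]]
          exact (ENNReal.ofReal_toReal (by simp)).symm
        have hcast : (N : ℝ≥0∞) * (m : ℝ≥0∞) = ENNReal.ofReal ((N : ℝ) * m) := by
          rw [ENNReal.ofReal_mul (by positivity)]
          simp
        rw [hq, hcast]
        apply ENNReal.ofReal_le_ofReal
        have hlog : (Nat.log 2 n : ℝ) ≤ Real.logb 2 n := Real.natLog_le_logb n 2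
        have hm1 : (1:ℝ) ≤ (m : ℝ) := by exact_mod_cast hm
        have h4 : (4 : ℝ) * m * (Nat.log 2 n : ℝ) ≤ 4 * m * Real.logb 2 n :=
          mul_le_mul_of_nonneg_left hlog (by positivity)
        have hNr : (N : ℝ) = (Nat.log 2 n : ℝ) + 1 := by rw [hN]; push_cast; ring
        nlinarith [h, h4, hNr]
end

section
/- Let n ≥ 16, let G = ([n], E) be a simple undirected graph, let S, V ⊆ [n] be disjoint with m(S,V) > 0, and let m̃ > 0. If m̃ ≤ m(S,V)/(4 log n), then CheckEstimate(S, V, m̃) accepts with probability at least 1/2. -/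
open MeasureTheory Finset
open scoped ENNReal NNReal

/-! ### Auxiliary lemmas -/

instance (p : ℝ≥0∞) : IsProbabilityMeasure (bern p) := PMF.toMeasure.isProbabilityMeasure _

instance (n : ℕ) (p : ℝ≥0∞) : IsProbabilityMeasure (bits n p) := by
  unfold bits; infer_instance

instance (n : ℕ) (mt : ℝ) (i : ℕ) : IsProbabilityMeasure (pairM n mt i) := by
  unfold pairM; infer_instance

lemma meas_all {n : ℕ} (s : Set (Fin n → Bool)) : MeasurableSet s :=
  (Set.to_countable s).measurableSet

lemma meas_all2 {n : ℕ} (s : Set ((Fin n → Bool) × (Fin n → Bool))) : MeasurableSet s :=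
  (Set.to_countable s).measurableSet

lemma bern_false (p : ℝ≥0∞) : bern p {false} = 1 - min p 1 := by
  rw [bern, PMF.toMeasure_apply_singleton _ _ (measurableSet_singleton _)]
  have key : ∀ (q : ℝ≥0) (hq : q ≤ 1), PMF.bernoulli q hq false = ((1 - q : ℝ≥0) : ℝ≥0∞) :=
    fun q hq => PMF.bernoulli_apply hq false
  refine (key _ _).trans ?_
  rw [ENNReal.coe_sub, ENNReal.coe_toNNReal (by simp), ENNReal.coe_one]

lemma bits_allFalse {n : ℕ} (p : ℝ≥0∞) (W : Finset (Fin n)) :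
    bits n p {σ | ∀ v ∈ W, σ v = false} = (1 - min p 1) ^ W.card := by
  classical
  have hset : {σ : Fin n → Bool | ∀ v ∈ W, σ v = false} =
      Set.pi Set.univ (fun v => if v ∈ W then ({false} : Set Bool) else Set.univ) := by
    ext σ
    simp only [Set.mem_setOf_eq, Set.mem_pi, Set.mem_univ, forall_true_left]
    constructor
    · intro h v
      by_cases hv : v ∈ W <;> simp [hv, h v]
    · intro h v hv
      have := h v
      simp [hv] at this
      exact this
  rw [hset, bits, Measure.pi_pi]
  have : ∀ v : Fin n, bern p (if v ∈ W then ({false} : Set Bool) else Set.univ)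
      = if v ∈ W then bern p {false} else 1 := by
    intro v; by_cases hv : v ∈ W
    · simp [hv]
    · simp only [hv, if_false]
      simpa using measure_univ (μ := bern p)
  simp_rw [this, bern_false]
  rw [Finset.prod_ite_mem, Finset.univ_inter, Finset.prod_const]

lemma bits_hit {n : ℕ} (p : ℝ≥0∞) (W : Finset (Fin n)) :
    bits n p {σ | ∃ v ∈ W, σ v = true} = 1 - (1 - min p 1) ^ W.card := by
  have hc : {σ : Fin n → Bool | ∃ v ∈ W, σ v = true}
      = {σ : Fin n → Bool | ∀ v ∈ W, σ v = false}ᶜ := by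
    ext σ
    simp only [Set.mem_setOf_eq, Set.mem_compl_iff, not_forall]
    constructor
    · rintro ⟨v, hv, h⟩; exact ⟨v, hv, by simp [h]⟩
    · rintro ⟨v, hv, h⟩; exact ⟨v, hv, by simpa using h⟩
  rw [hc, prob_compl_eq_one_sub (meas_all _), bits_allFalse]

/-- Cylinder lower bound for product measures. -/
lemma pi_eval_le {ι : Type*} [Fintype ι] {α : ι → Type*} [∀ i, MeasurableSpace (α i)]
    (μ : ∀ i, Measure (α i)) [∀ i, IsProbabilityMeasure (μ i)] (i : ι)
    (A : Set (α i)) : μ i A ≤ Measure.pi μ {ω | ω i ∈ A} := by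
  classical
  have h1 : {ω : ∀ i, α i | ω i ∈ A} = Function.eval i ⁻¹' A := rfl
  rw [h1, ← Set.univ_pi_update_univ, Measure.pi_pi]
  rw [Fintype.prod_eq_single i (fun k hk => by
    rw [Function.update_of_ne hk]; exact measure_univ)]
  rw [Function.update_self]

/-- Lower bound for a product measure via a slice bound. -/
lemma prod_le_of_slice {X Y : Type*} [MeasurableSpace X] [MeasurableSpace Y]
    (μ : Measure X) (ν : Measure Y) [SFinite ν]
    (A : Set (X × Y)) (hA : MeasurableSet A) (H : Set X) (hH : MeasurableSet H)
    (c : ℝ≥0∞) (hc : ∀ x ∈ H, c ≤ ν (Prod.mk x ⁻¹' A)) :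
    c * μ H ≤ μ.prod ν A := by
  rw [Measure.prod_apply hA, ← lintegral_indicator_const hH c]
  refine lintegral_mono fun x => ?_
  by_cases hx : x ∈ H
  · simpa [hx] using hc x hx
  · simp [hx]

open scoped Classical in
/-- degree of `u` into `V`. -/
noncomputable def degd {n : ℕ} (G : SimpleGraph (Fin n)) (V : Finset (Fin n)) (u : Fin n) :
    Finset (Fin n) := V.filter (G.Adj u)

open scoped Classical in
lemma mSV_eq_sum {n : ℕ} (G : SimpleGraph (Fin n)) (S V : Finset (Fin n)) :
    mSV G S V = ∑ u ∈ S, (degd G V u).card := by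
  rw [mSV, Finset.card_eq_sum_card_fiberwise (f := Prod.fst) (t := S)
    (fun p hp => by simp only [Finset.mem_coe, Finset.mem_filter] at hp; exact hp.2.2.1)]
  refine Finset.sum_congr rfl fun u hu => ?_
  have : (Finset.univ.filter fun p : Fin n × Fin n =>
        G.Adj p.1 p.2 ∧ p.1 ∈ S ∧ p.2 ∈ V).filter (fun p => p.1 = u)
      = (degd G V u).image (fun v => (u, v)) := by
    ext ⟨a, b⟩
    simp only [Finset.mem_filter, Finset.mem_univ, true_and, Finset.mem_image, degd]
    constructor
    · rintro ⟨⟨hadj, _, hbV⟩, rfl⟩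
      exact ⟨b, ⟨hbV, hadj⟩, rfl⟩
    · rintro ⟨v, hv, h⟩
      obtain ⟨rfl, rfl⟩ := Prod.mk.injEq .. ▸ h
      exact ⟨⟨hv.2, hu, hv.1⟩, rfl⟩
  rw [this, Finset.card_image_of_injective _ (fun x y h => by simpa using h)]

lemma mSV_pos_of_mem {n : ℕ} (G : SimpleGraph (Fin n)) (S V : Finset (Fin n))
    (u v : Fin n) (hu : u ∈ S) (hv : v ∈ V) (hadj : G.Adj u v) : mSV G S V ≠ 0 := by
  classical
  rw [mSV]
  have hmem : (u, v) ∈ (Finset.univ.filter fun p : Fin n × Fin n =>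
      G.Adj p.1 p.2 ∧ p.1 ∈ S ∧ p.2 ∈ V) := by
    simp [hu, hv, hadj]
  intro hcard
  rw [Finset.card_eq_zero] at hcard
  simp [hcard] at hmem

lemma numeric (x1 x2 : ℝ) (h1 : x1 ≤ Real.exp (-(8/5))) (h2 : x2 ≤ Real.exp (-1))
    (h1' : 0 ≤ x1) (h2' : 0 ≤ x2) : 1/2 ≤ (1 - x1) * (1 - x2) := by
  have e1 : (2.7182818 : ℝ) ≤ Real.exp 1 := by
    have := Real.exp_one_gt_d9; linarith
  have e85 : (4.9 : ℝ) ≤ Real.exp (8/5) := by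
    by_contra hlt
    push_neg at hlt
    have key : Real.exp (8/5) ^ 5 = Real.exp 1 ^ 8 := by
      rw [← Real.exp_nat_mul, ← Real.exp_nat_mul]; norm_num
    have h5 : Real.exp (8/5) ^ 5 < 4.9 ^ 5 :=
      pow_lt_pow_left₀ hlt (le_of_lt (Real.exp_pos _)) (by norm_num)
    have h8 : (2.7182818:ℝ)^8 ≤ Real.exp 1 ^ 8 := pow_le_pow_left₀ (by norm_num) e1 8
    rw [key] at h5
    nlinarith
  have a1 : x1 ≤ 1/4.9 := by
    refine h1.trans ?_
    rw [Real.exp_neg, inv_le_comm₀ (Real.exp_pos _) (by norm_num)]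
    simpa using e85
  have a2 : x2 ≤ 1/2.7182818 := by
    refine h2.trans ?_
    rw [Real.exp_neg, inv_le_comm₀ (Real.exp_pos _) (by norm_num)]
    simpa using e1
  nlinarith [mul_nonneg (sub_nonneg.2 a1) (sub_nonneg.2 (show x2 ≤ 1 by nlinarith)),
    mul_nonneg (sub_nonneg.2 a2) (show (0:ℝ) ≤ 1 - 1/4.9 by norm_num)]

lemma pow_one_sub_le (c : ℝ) (hc1 : c ≤ 1) (k : ℕ) :
    (1 - c) ^ k ≤ Real.exp (-(c * k)) := by
  have h : 1 - c ≤ Real.exp (-c) := by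
    have := Real.add_one_le_exp (-c); linarith
  calc (1-c)^k ≤ Real.exp (-c) ^ k := pow_le_pow_left₀ (by linarith) h k
    _ = Real.exp (k * (-c)) := (Real.exp_nat_mul _ _).symm
    _ = Real.exp (-(c*k)) := by ring_nf

set_option maxHeartbeats 1000000

theorem stmt10 (n : ℕ) (hn : 16 ≤ n) (G : SimpleGraph (Fin n)) (S V : Finset (Fin n))
    (hSV : Disjoint S V) (hm : 0 < mSV G S V) (mt : ℝ) (hmt : 0 < mt)
    (h : mt ≤ (mSV G S V : ℝ) / (4 * Real.logb 2 n)) :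
    1 / 2 ≤ ceM n mt {ω | ceAccepts G S V ω} := by
  classical
  set L : ℝ := Real.logb 2 n with hLdef
  have hL4 : (4:ℝ) ≤ L := by
    have h16 : (16:ℝ) ≤ (n:ℝ) := by exact_mod_cast hn
    have hmono : Real.logb 2 16 ≤ Real.logb 2 n :=
      Real.logb_le_logb_of_le (by norm_num) (by norm_num) h16
    have h416 : Real.logb 2 16 = 4 := by
      have h16e : (16:ℝ) = 2^(4:ℕ) := by norm_num
      rw [h16e, Real.logb_pow, Real.logb_self_eq_one (by norm_num : (1:ℝ) < 2)]
      norm_num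
    rw [hLdef]; linarith
  set B : ℕ := Nat.log 2 n + 1 with hBdef
  have hBpos : 0 < B := Nat.succ_pos _
  have hBle : (B:ℝ) ≤ L + 1 := by
    have h0 := Real.natLog_le_logb n 2
    have h0' : (Nat.log 2 n : ℝ) ≤ Real.logb 2 n := by push_cast at h0 ⊢; exact h0
    rw [hBdef]; push_cast; rw [hLdef]; linarith
  -- pigeonhole over degree buckets
  set m := mSV G S V with hmdef
  have hmR : (0:ℝ) < (m:ℝ) := by exact_mod_cast hm
  set S' := S.filter (fun u => (degd G V u).card ≠ 0) with hS'def
  have hsum : ∑ u ∈ S', (degd G V u).card = m := by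
    rw [hmdef, mSV_eq_sum, hS'def]
    exact Finset.sum_filter_ne_zero _
  have hmaps : ∀ u ∈ S', Nat.log 2 ((degd G V u).card) ∈ Finset.range B := by
    intro u _
    simp only [Finset.mem_range, hBdef]
    have hdn : (degd G V u).card ≤ n := by
      refine le_trans (Finset.card_le_card (Finset.filter_subset _ _)) ?_
      simpa using Finset.card_le_univ V
    have := Nat.log_mono_right (b := 2) hdn
    omega
  have hfib : ∑ j ∈ Finset.range B,
      ∑ u ∈ S'.filter (fun u => Nat.log 2 ((degd G V u).card) = j), (degd G V u).card = m := by
    rw [Finset.sum_fiberwise_of_maps_to hmaps, hsum]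
  have htot : ∑ _j ∈ Finset.range B, ((m:ℝ)/B) ≤ ∑ j ∈ Finset.range B,
      ∑ u ∈ S'.filter (fun u => Nat.log 2 ((degd G V u).card) = j), ((degd G V u).card : ℝ) := by
    rw [Finset.sum_const, Finset.card_range, nsmul_eq_mul,
      mul_div_cancel₀ _ (by exact_mod_cast hBpos.ne')]
    rw [show (∑ j ∈ Finset.range B,
      ∑ u ∈ S'.filter (fun u => Nat.log 2 ((degd G V u).card) = j), ((degd G V u).card : ℝ))
      = ((∑ j ∈ Finset.range B,
      ∑ u ∈ S'.filter (fun u => Nat.log 2 ((degd G V u).card) = j), (degd G V u).card : ℕ) : ℝ)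
      by push_cast; rfl]
    rw [hfib]
  obtain ⟨j, hjr, hjge⟩ := Finset.exists_le_of_sum_le ⟨0, Finset.mem_range.2 hBpos⟩ htot
  set T := S'.filter (fun u => Nat.log 2 ((degd G V u).card) = j) with hTdef
  set mj : ℝ := ∑ u ∈ T, ((degd G V u).card : ℝ) with hmjdef
  have hmjpos : 0 < mj := lt_of_lt_of_le (by positivity) hjge
  have hTne : T.Nonempty := by
    rcases T.eq_empty_or_nonempty with he | hne
    · rw [hmjdef, he] at hmjpos; simp at hmjpos
    · exact hne
  set k := T.card with hkdef
  have hk0 : k ≠ 0 := by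
    rw [hkdef]; exact Finset.card_ne_zero_of_mem hTne.choose_spec
  have hdeg_lb : ∀ u ∈ T, 2^j ≤ (degd G V u).card := by
    intro u hu
    rw [hTdef] at hu
    obtain ⟨hu1, hu2⟩ := Finset.mem_filter.1 hu
    obtain ⟨_, hne⟩ := Finset.mem_filter.1 hu1
    calc 2^j = 2^(Nat.log 2 ((degd G V u).card)) := by rw [hu2]
      _ ≤ (degd G V u).card := Nat.pow_log_le_self 2 hne
  have hdeg_ub : ∀ u ∈ T, (degd G V u).card ≤ 2^(j+1) := by
    intro u hu
    rw [hTdef] at hu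
    obtain ⟨_, hu2⟩ := Finset.mem_filter.1 hu
    have := Nat.lt_pow_succ_log_self (by norm_num : 1 < 2) ((degd G V u).card)
    rw [hu2] at this
    omega
  have hmj_le : mj ≤ (k:ℝ) * 2^(j+1) := by
    rw [hmjdef]
    calc ∑ u ∈ T, ((degd G V u).card : ℝ) ≤ ∑ u ∈ T, ((2:ℝ)^(j+1)) := by
          refine Finset.sum_le_sum fun u hu => ?_
          have := hdeg_ub u hu
          exact_mod_cast (by exact_mod_cast this : ((degd G V u).card : ℝ) ≤ ((2^(j+1) : ℕ) : ℝ))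
      _ = (k:ℝ) * 2^(j+1) := by rw [Finset.sum_const, nsmul_eq_mul, hkdef]
  have hj_le : j ≤ Nat.log 2 n := by
    have := Finset.mem_range.1 hjr
    omega
  have hTS : T ⊆ S := by
    rw [hTdef, hS'def]
    exact (Finset.filter_subset _ _).trans (Finset.filter_subset _ _)
  -- the acceptance event and reduction to iteration j
  set A : Set ((Fin n → Bool) × (Fin n → Bool)) :=
    {x | mSV G (sub S x.1) (sub V x.2) ≠ 0} with hAdef
  set i0 : Fin (Nat.log 2 n + 1) := ⟨j, by omega⟩ with hi0
  have step1 : ceM n mt {ω | ω i0 ∈ A} ≤ ceM n mt {ω | ceAccepts G S V ω} := by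
    refine measure_mono fun ω hω => ⟨i0, hω⟩
  have step2 : pairM n mt j A ≤ ceM n mt {ω | ω i0 ∈ A} := by
    rw [ceM]
    exact pi_eval_le (fun i : Fin (Nat.log 2 n + 1) => pairM n mt (i:ℕ)) i0 A
  -- iteration j lower bound
  set Hit : Set (Fin n → Bool) := {σ | ∃ u ∈ T, σ u = true} with hHitdef
  set q2 : ℝ≥0∞ := ((2:ℝ≥0∞)^j)⁻¹ with hq2def
  set c2 : ℝ≥0∞ := 1 - (1 - q2) ^ (2^j : ℕ) with hc2def
  have hq2min : min ((2:ℝ≥0∞)^j)⁻¹ 1 = q2 := by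
    rw [hq2def]
    exact min_eq_left (by simp [ENNReal.inv_le_one]; exact one_le_pow₀ (by norm_num : (1:ℝ≥0∞) ≤ 2))
  have hslice : ∀ σ ∈ Hit, c2 ≤ (bits n ((2:ℝ≥0∞)^j)⁻¹) (Prod.mk σ ⁻¹' A) := by
    intro σ hσ
    obtain ⟨u, huT, hσu⟩ := hσ
    have hsub : {τ : Fin n → Bool | ∃ v ∈ degd G V u, τ v = true} ⊆ Prod.mk σ ⁻¹' A := by
      rintro τ ⟨v, hv, hτv⟩
      obtain ⟨hvV, hadj⟩ := Finset.mem_filter.1 hv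
      exact mSV_pos_of_mem G _ _ u v (Finset.mem_filter.2 ⟨hTS huT, hσu⟩)
        (Finset.mem_filter.2 ⟨hvV, hτv⟩) hadj
    refine le_trans ?_ (measure_mono hsub)
    rw [bits_hit, hq2min]
    rw [hc2def]
    refine tsub_le_tsub_left ?_ 1
    exact pow_le_pow_of_le_one (zero_le') tsub_le_self (hdeg_lb u huT)
  set q1 : ℝ≥0∞ := min (ENNReal.ofReal (2^j / mt)) 1 with hq1def
  have hμHit : bits n (ENNReal.ofReal (2^j/mt)) Hit = 1 - (1 - q1)^k := by
    rw [hHitdef, bits_hit, hq1def, hkdef]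
  have step3 : c2 * (1 - (1-q1)^k) ≤ pairM n mt j A := by
    rw [pairM, ← hμHit]
    exact prod_le_of_slice _ _ A (meas_all2 A) Hit (meas_all _) c2 hslice
  -- now the numeric bound
  set r2 : ℝ := ((2:ℝ)^j)⁻¹ with hr2def
  set p1 : ℝ := min (2^j/mt) 1 with hp1def
  set x2 : ℝ := (1 - r2)^(2^j : ℕ) with hx2def
  set x1 : ℝ := (1 - p1)^k with hx1def
  have hr2pos : 0 < r2 := by rw [hr2def]; positivity
  have hr2le : r2 ≤ 1 := by
    rw [hr2def]
    rw [inv_le_one_iff₀]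
    right; exact one_le_pow₀ (by norm_num : (1:ℝ) ≤ 2)
  have hq2R : q2 = ENNReal.ofReal r2 := by
    rw [hq2def, hr2def, ENNReal.ofReal_inv_of_pos (by positivity), ENNReal.ofReal_pow
      (by norm_num : (0:ℝ) ≤ 2)]
    norm_num
  have hp1mem : 0 ≤ p1 ∧ p1 ≤ 1 := by
    constructor
    · rw [hp1def]
      exact le_min (div_nonneg (by positivity) hmt.le) zero_le_one
    · rw [hp1def]; exact min_le_right _ _
  have hq1R : q1 = ENNReal.ofReal p1 := by
    rw [hq1def, hp1def]
    rcases le_total ((2:ℝ)^j/mt) 1 with hle | hge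
    · rw [min_eq_left hle, min_eq_left (by
        rw [← ENNReal.ofReal_one]; exact ENNReal.ofReal_le_ofReal hle)]
    · rw [min_eq_right hge, min_eq_right (by
        rw [← ENNReal.ofReal_one]; exact ENNReal.ofReal_le_ofReal hge), ENNReal.ofReal_one]
  have hx2mem : 0 ≤ x2 ∧ x2 ≤ 1 := by
    constructor
    · rw [hx2def]; exact pow_nonneg (by linarith) _
    · rw [hx2def]
      exact pow_le_one₀ (by linarith) (by linarith)
  have hx1mem : 0 ≤ x1 ∧ x1 ≤ 1 := by
    constructor
    · rw [hx1def]; exact pow_nonneg (by linarith [hp1mem.2]) _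
    · rw [hx1def]
      exact pow_le_one₀ (by linarith [hp1mem.2]) (by linarith [hp1mem.1])
  have hc2R : c2 = ENNReal.ofReal (1 - x2) := by
    rw [hc2def, hq2R, hx2def]
    rw [ENNReal.ofReal_sub _ hx2mem.1, ENNReal.ofReal_pow (by linarith), ENNReal.ofReal_sub _ (le_of_lt hr2pos)]
    simp
  have hc1R : 1 - (1-q1)^k = ENNReal.ofReal (1 - x1) := by
    rw [hq1R, hx1def]
    rw [ENNReal.ofReal_sub _ hx1mem.1, ENNReal.ofReal_pow (by linarith [hp1mem.2]), ENNReal.ofReal_sub _ hp1mem.1]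
    simp
  -- real bounds
  have hx2exp : x2 ≤ Real.exp (-1) := by
    have := pow_one_sub_le r2 hr2le (2^j)
    rw [← hx2def] at this
    refine this.trans ?_
    have : r2 * ((2^j : ℕ) : ℝ) = 1 := by
      rw [hr2def]; push_cast
      exact inv_mul_cancel₀ (by positivity)
    rw [this]
  have hx1exp : x1 ≤ Real.exp (-(8/5)) := by
    rcases le_or_gt 1 ((2:ℝ)^j/mt) with hge | hlt
    · have hp11 : p1 = 1 := by rw [hp1def, min_eq_right hge]
      rw [hx1def, hp11]
      simp [zero_pow hk0]
      positivity
    · have hp1eq : p1 = (2:ℝ)^j/mt := by rw [hp1def, min_eq_left (le_of_lt hlt)]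
      have hstep := pow_one_sub_le p1 hp1mem.2 k
      rw [← hx1def] at hstep
      refine hstep.trans (Real.exp_le_exp.2 ?_)
      -- need  -(p1 * k) ≤ -(8/5), i.e. 8/5 ≤ p1 * k
      have hgoal : 8/5 ≤ p1 * k := by
        have hm4L : 4 * L * mt ≤ (m:ℝ) := by
          have hLpos : (0:ℝ) < 4 * L := by linarith
          rw [le_div_iff₀ hLpos] at h
          linarith
        have hB5 : 4*(B:ℝ) ≤ 5 * L := by linarith
        have hBRpos : (0:ℝ) < (B:ℝ) := by exact_mod_cast hBpos
        have hmB : (16/5) * mt ≤ (m:ℝ)/B := by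
          rw [le_div_iff₀ hBRpos]
          nlinarith
        have hmjlb : (16/5) * mt ≤ mj := le_trans hmB (le_trans hjge le_rfl)
        -- p1 * k ≥ mj / (2 * mt)
        have hpow : (2:ℝ)^(j+1) = 2 * 2^j := by ring
        have hkR : mj ≤ (k:ℝ) * (2 * 2^j) := by rw [← hpow]; exact hmj_le
        have hp1k : mj / (2*mt) ≤ p1 * k := by
          rw [hp1eq, div_le_iff₀ (by positivity)]
          have heq : (2:ℝ)^j/mt * k * (2*mt) = (k:ℝ) * (2*2^j) := by
            field_simp
          rw [heq]; exact hkR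
        refine le_trans ?_ hp1k
        rw [le_div_iff₀ (by positivity)]
        linarith
      linarith
  -- combine
  have hfinal : (1/2 : ℝ≥0∞) ≤ c2 * (1 - (1-q1)^k) := by
    rw [hc2R, hc1R, ← ENNReal.ofReal_mul (by linarith [hx2mem.2])]
    have hhalf : (1/2 : ℝ≥0∞) = ENNReal.ofReal (1/2) := by
      rw [ENNReal.ofReal_div_of_pos (by norm_num), ENNReal.ofReal_one]
      norm_num
    rw [hhalf]
    refine ENNReal.ofReal_le_ofReal ?_
    have := numeric x1 x2 hx1exp hx2exp hx1mem.1 hx2mem.1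
    nlinarith
  exact le_trans hfinal (le_trans step3 (le_trans step2 step1))
end

section
/- Let U = {x_1, …, x_r} be a finite list of real numbers, all contained in the interval [α/b, α·b], for some α > 0 and b ≥ 1, and let Γ = Σ_{i=1}^{r} x_i. Let γ, ε > 0 and let t be any integer with t ≥ (b^4/(2ε^2))·(1 + ln(1/γ)). For i = 1, …, t let X_i be chosen independently and uniformly at random from U, and set Y = (r/t)·Σ_{i=1}^{t} X_i. Then Pr[ |Y − Γ| ≥ ε·Γ ] ≤ γ. -/
open MeasureTheory Finset
open scoped ENNReal NNReal

/-- Uniform probability measure on a finite type. -/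
noncomputable def unifM (α : Type*) [Fintype α] [MeasurableSpace α] : Measure α :=
  (Fintype.card α : ℝ≥0∞)⁻¹ • Measure.count

lemma unifM_apply {X : Type*} [Fintype X] [MeasurableSpace X] [MeasurableSingletonClass X]
    (S : Set X) :
    unifM X S = (Fintype.card X : ℝ≥0∞)⁻¹ * (S.toFinite.toFinset.card : ℝ≥0∞) := by
  rw [unifM, Measure.smul_apply, smul_eq_mul,
    Measure.count_apply_finite' S.toFinite S.toFinite.measurableSet]

lemma transfer {c : ℕ} (hc : c ≠ 0) {N : ℕ} {γ : ℝ} (hγ : 0 ≤ γ) (h : (N : ℝ) ≤ γ * c) :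
    ((c : ℝ≥0∞))⁻¹ * (N : ℝ≥0∞) ≤ ENNReal.ofReal γ := by
  have h1 : (N : ℝ≥0∞) ≤ ENNReal.ofReal γ * c := by
    have h2 := ENNReal.ofReal_le_ofReal h
    rwa [ENNReal.ofReal_natCast, ENNReal.ofReal_mul hγ, ENNReal.ofReal_natCast] at h2
  calc (c : ℝ≥0∞)⁻¹ * N ≤ (c : ℝ≥0∞)⁻¹ * (ENNReal.ofReal γ * c) := mul_le_mul' le_rfl h1
  _ = ENNReal.ofReal γ := by
      rw [mul_comm (ENNReal.ofReal γ), ← mul_assoc,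
        ENNReal.inv_mul_cancel (by exact_mod_cast hc) (ENNReal.natCast_ne_top c), one_mul]

lemma hoeffding_scalar (q : ℝ) (hq0 : 0 ≤ q) (hq1 : q ≤ 1) (v : ℝ) :
    1 - q + q * Real.exp v ≤ Real.exp (q * v + v ^ 2 / 8) := by
  have hD : ∀ w : ℝ, 0 < 1 - q + q * Real.exp w := by
    intro w
    rcases le_total (Real.exp w) 1 with h | h
    · nlinarith [Real.exp_pos w]
    · nlinarith [Real.exp_pos w]
  set f : ℝ → ℝ := fun w => q * w + w ^ 2 / 8 - Real.log (1 - q + q * Real.exp w) with hf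
  set φ : ℝ → ℝ := fun w => q + w / 4 - q * Real.exp w / (1 - q + q * Real.exp w) with hφ
  have hderiv : ∀ w, HasDerivAt f (φ w) w := by
    intro w
    have h1 : HasDerivAt (fun w : ℝ => 1 - q + q * Real.exp w) (q * Real.exp w) w := by
      simpa using ((Real.hasDerivAt_exp w).const_mul q).const_add (1 - q)
    have h2 : HasDerivAt (fun w : ℝ => Real.log (1 - q + q * Real.exp w))
        (q * Real.exp w / (1 - q + q * Real.exp w)) w := h1.log (hD w).ne'
    have h3 : HasDerivAt (fun w : ℝ => q * w + w ^ 2 / 8) (q + w / 4) w := by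
      have := ((hasDerivAt_pow 2 w).div_const 8).const_add 0
      have h4 : HasDerivAt (fun w : ℝ => q * w) q w := by
        simpa using (hasDerivAt_id w).const_mul q
      refine (h4.add ((hasDerivAt_pow 2 w).div_const 8)).congr_deriv ?_
      ring
    exact h3.sub h2
  have hφderiv : ∀ w, HasDerivAt φ
      (1/4 - (q * Real.exp w * (1 - q + q * Real.exp w) - q * Real.exp w * (q * Real.exp w)) /
        (1 - q + q * Real.exp w) ^ 2) w := by
    intro w
    have h1 : HasDerivAt (fun w : ℝ => 1 - q + q * Real.exp w) (q * Real.exp w) w := by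
      simpa using ((Real.hasDerivAt_exp w).const_mul q).const_add (1 - q)
    have h2 : HasDerivAt (fun w : ℝ => q * Real.exp w) (q * Real.exp w) w :=
      (Real.hasDerivAt_exp w).const_mul q
    have h3 := h2.div h1 (hD w).ne'
    have h4 : HasDerivAt (fun w : ℝ => q + w / 4) (1/4) w := by
      simpa using ((hasDerivAt_id w).div_const 4).const_add q
    exact h4.sub h3
  have hφmono : Monotone φ := by
    apply monotone_of_deriv_nonneg
    · exact fun w => (hφderiv w).differentiableAt
    · intro w
      rw [(hφderiv w).deriv]
      set y := q * Real.exp w / (1 - q + q * Real.exp w) with hy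
      have hDw := hD w
      have hyeq : (q * Real.exp w * (1 - q + q * Real.exp w) - q * Real.exp w * (q * Real.exp w)) /
          (1 - q + q * Real.exp w) ^ 2 = y - y ^ 2 := by
        rw [hy]; field_simp
      rw [hyeq]
      have hy0 : 0 ≤ y := by positivity
      have hy1 : y ≤ 1 := by
        rw [hy, div_le_one hDw]
        nlinarith
      nlinarith [sq_nonneg (y - 1/2)]
  have hφ0 : φ 0 = 0 := by simp [hφ]
  have hf0 : f 0 = 0 := by simp [hf]
  have hfnn : ∀ w, 0 ≤ f w := by
    intro w
    rcases le_total 0 w with h | h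
    · have : MonotoneOn f (Set.Ici 0) := by
        apply monotoneOn_of_deriv_nonneg (convex_Ici 0)
        · exact (Differentiable.continuous (fun w => (hderiv w).differentiableAt)).continuousOn
        · intro z hz
          exact (hderiv z).differentiableAt.differentiableWithinAt
        · intro z hz
          rw [(hderiv z).deriv]
          have : (0:ℝ) ≤ z := le_of_lt (by simpa [interior_Ici] using hz)
          calc (0:ℝ) = φ 0 := hφ0.symm
          _ ≤ φ z := hφmono this
      have := this (Set.self_mem_Ici) (Set.mem_Ici.2 h) h
      linarith [hf0 ▸ this]
    · have : AntitoneOn f (Set.Iic 0) := by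
        apply antitoneOn_of_deriv_nonpos (convex_Iic 0)
        · exact (Differentiable.continuous (fun w => (hderiv w).differentiableAt)).continuousOn
        · intro z hz
          exact (hderiv z).differentiableAt.differentiableWithinAt
        · intro z hz
          rw [(hderiv z).deriv]
          have : z ≤ (0:ℝ) := le_of_lt (by simpa [interior_Iic] using hz)
          calc φ z ≤ φ 0 := hφmono this
          _ = 0 := hφ0
      have := this (Set.mem_Iic.2 h) (Set.self_mem_Iic) h
      linarith [hf0 ▸ this]
  have := hfnn v
  have hlog : Real.log (1 - q + q * Real.exp v) ≤ q * v + v ^ 2 / 8 := by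
    simp only [hf] at this; linarith
  calc 1 - q + q * Real.exp v = Real.exp (Real.log (1 - q + q * Real.exp v)) :=
        (Real.exp_log (hD v)).symm
  _ ≤ _ := Real.exp_le_exp.2 hlog


lemma mgf_bound {r : ℕ} (hr : 0 < r) (u : Fin r → ℝ) (A B : ℝ)
    (hu : ∀ j, u j ∈ Set.Icc A B) (hsum : ∑ j, u j = 0) (s : ℝ) :
    ∑ j, Real.exp (s * u j) ≤ (r : ℝ) * Real.exp (s ^ 2 * (B - A) ^ 2 / 8) := by
  have hAB : A ≤ B := le_trans (hu ⟨0, hr⟩).1 (hu ⟨0, hr⟩).2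
  have hrpos : (0:ℝ) < r := Nat.cast_pos.2 hr
  have hA : (r : ℝ) * A ≤ 0 := by
    calc (r:ℝ) * A = ∑ _j : Fin r, A := by simp [mul_comm]
    _ ≤ ∑ j, u j := Finset.sum_le_sum (fun j _ => (hu j).1)
    _ = 0 := hsum
  have hB : 0 ≤ (r : ℝ) * B := by
    calc (0:ℝ) = ∑ j, u j := hsum.symm
    _ ≤ ∑ _j : Fin r, B := Finset.sum_le_sum (fun j _ => (hu j).2)
    _ = (r:ℝ) * B := by simp [mul_comm]
  have hA0 : A ≤ 0 := by nlinarith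
  have hB0 : 0 ≤ B := by nlinarith
  rcases eq_or_lt_of_le hAB with heq | hlt
  · have hA0' : A = 0 := le_antisymm hA0 (heq ▸ hB0)
    have hu0 : ∀ j, u j = 0 := by
      intro j
      have h1 := (hu j).1
      have h2 := (hu j).2
      rw [← heq] at h2
      rw [hA0'] at h1 h2
      exact le_antisymm h2 h1
    simp only [hu0, mul_zero, Real.exp_zero]
    simp only [Finset.sum_const, card_univ, Fintype.card_fin, nsmul_eq_mul, mul_one]
    nlinarith [Real.one_le_exp (by positivity : (0:ℝ) ≤ s ^ 2 * (B - A) ^ 2 / 8)]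
  · set d := B - A with hd
    have hdpos : 0 < d := by simp only [hd]; linarith
    set q := -A / d with hq
    have hq0 : 0 ≤ q := div_nonneg (neg_nonneg.2 hA0) hdpos.le
    have hq1 : q ≤ 1 := by
      rw [hq, div_le_one hdpos]; simp only [hd]; linarith
    -- pointwise convexity bound
    have step1 : ∀ j, Real.exp (s * u j) ≤
        (B - u j) / d * Real.exp (s * A) + (u j - A) / d * Real.exp (s * B) := by
      intro j
      have h1 : 0 ≤ (B - u j) / d := div_nonneg (by linarith [(hu j).2]) hdpos.le
      have h2 : 0 ≤ (u j - A) / d := div_nonneg (by linarith [(hu j).1]) hdpos.le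
      have h3 : (B - u j) / d + (u j - A) / d = 1 := by
        rw [← add_div, div_eq_one_iff_eq hdpos.ne']
        simp only [hd]; ring
      have := convexOn_exp.2 (Set.mem_univ (s * A)) (Set.mem_univ (s * B)) h1 h2 h3
      have harg : ((B - u j) / d) • (s * A) + ((u j - A) / d) • (s * B) = s * u j := by
        simp only [smul_eq_mul]
        field_simp
        ring
      rwa [harg] at this
    have step2 : ∑ j, Real.exp (s * u j) ≤
        (r:ℝ) * ((1 - q) * Real.exp (s * A) + q * Real.exp (s * B)) := by
      calc ∑ j, Real.exp (s * u j)
          ≤ ∑ j, ((B - u j) / d * Real.exp (s * A) + (u j - A) / d * Real.exp (s * B)) :=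
            Finset.sum_le_sum (fun j _ => step1 j)
      _ = (∑ j, (B - u j)) / d * Real.exp (s * A) + (∑ j, (u j - A)) / d * Real.exp (s * B) := by
            rw [Finset.sum_add_distrib, ← Finset.sum_mul, ← Finset.sum_mul, ← Finset.sum_div,
              ← Finset.sum_div]
      _ = (r:ℝ) * ((1 - q) * Real.exp (s * A) + q * Real.exp (s * B)) := by
            have e1 : ∑ j, (B - u j) = (r:ℝ) * B := by
              rw [Finset.sum_sub_distrib, hsum]; simp [mul_comm]
            have e2 : ∑ j, (u j - A) = -((r:ℝ) * A) := by
              rw [Finset.sum_sub_distrib, hsum]; simp [mul_comm]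
            rw [e1, e2, hq, hd]
            field_simp
            ring
    have step3 : (1 - q) * Real.exp (s * A) + q * Real.exp (s * B) ≤
        Real.exp (s ^ 2 * (B - A) ^ 2 / 8) := by
      have key := hoeffding_scalar q hq0 hq1 (s * d)
      have e3 : (1 - q) * Real.exp (s * A) + q * Real.exp (s * B)
          = Real.exp (s * A) * (1 - q + q * Real.exp (s * d)) := by
        rw [mul_add]
        have : Real.exp (s * A) * (q * Real.exp (s * d)) = q * Real.exp (s * B) := by
          rw [mul_comm (Real.exp (s*A)), mul_assoc, ← Real.exp_add]
          congr 2
          simp only [hd]; ring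
        rw [this]; ring
      rw [e3]
      calc Real.exp (s * A) * (1 - q + q * Real.exp (s * d))
          ≤ Real.exp (s * A) * Real.exp (q * (s * d) + (s * d) ^ 2 / 8) :=
            mul_le_mul_of_nonneg_left key (Real.exp_pos _).le
      _ = Real.exp (s * A + q * (s * d) + (s * d) ^ 2 / 8) := by
            rw [← Real.exp_add]; ring_nf
      _ = Real.exp (s ^ 2 * (B - A) ^ 2 / 8) := by
            congr 1
            have hqd : q * d = -A := by rw [hq]; field_simp
            have : s * A + q * (s * d) = s * (A + q * d) := by ring
            rw [this, hqd]
            simp only [hd]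
            ring
    calc ∑ j, Real.exp (s * u j) ≤ (r:ℝ) * ((1 - q) * Real.exp (s * A) + q * Real.exp (s * B)) :=
          step2
    _ ≤ (r:ℝ) * Real.exp (s ^ 2 * (B - A) ^ 2 / 8) :=
          mul_le_mul_of_nonneg_left step3 hrpos.le

lemma chernoff_count {r t : ℕ} (w : Fin r → ℝ) (a s : ℝ) (hs : 0 ≤ s) :
    ((Finset.univ.filter (fun ω : Fin t → Fin r => a ≤ ∑ i, w (ω i))).card : ℝ)
        * Real.exp (s * a)
      ≤ (∑ j, Real.exp (s * w j)) ^ t := by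
  have key : (∑ j, Real.exp (s * w j)) ^ t
      = ∑ ω : Fin t → Fin r, Real.exp (s * ∑ i, w (ω i)) := by
    rw [Fintype.sum_pow (fun j => Real.exp (s * w j)) t]
    apply Finset.sum_congr rfl
    intro ω _
    rw [Finset.mul_sum, Real.exp_sum]
  rw [key]
  calc ((Finset.univ.filter (fun ω : Fin t → Fin r => a ≤ ∑ i, w (ω i))).card : ℝ)
        * Real.exp (s * a)
      = ∑ _ω ∈ Finset.univ.filter (fun ω : Fin t → Fin r => a ≤ ∑ i, w (ω i)),
          Real.exp (s * a) := by rw [Finset.sum_const, nsmul_eq_mul]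
  _ ≤ ∑ ω ∈ Finset.univ.filter (fun ω : Fin t → Fin r => a ≤ ∑ i, w (ω i)),
          Real.exp (s * ∑ i, w (ω i)) := by
        apply Finset.sum_le_sum
        intro ω hω
        rw [Finset.mem_filter] at hω
        exact Real.exp_le_exp.2 (mul_le_mul_of_nonneg_left hω.2 hs)
  _ ≤ ∑ ω : Fin t → Fin r, Real.exp (s * ∑ i, w (ω i)) :=
        Finset.sum_le_sum_of_subset_of_nonneg (Finset.filter_subset _ _)
          (fun ω _ _ => (Real.exp_pos _).le)

set_option maxHeartbeats 2000000 in
/-- **importance sampling.** Let `x_1, …, x_r` be real numbers lying in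
`[α/b, α·b]` with `α > 0`, `b ≥ 1`, and let `Γ = ∑ x_i`.  Let `γ, ε > 0` and let
`t ≥ (b⁴/(2ε²))·(1 + ln(1/γ))`.  Choosing `X_1, …, X_t` independently and uniformly
from the list (modeled by a uniform function `ω : Fin t → Fin r`) and setting
`Y = (r/t)·∑ X_i`, we have `Pr[ |Y − Γ| ≥ ε·Γ ] ≤ γ`. -/
theorem stmt12 (r : ℕ) (x : Fin r → ℝ) (α b : ℝ) (hα : 0 < α) (hb : 1 ≤ b)
    (hx : ∀ i, x i ∈ Set.Icc (α / b) (α * b)) (γ ε : ℝ) (hγ : 0 < γ) (hε : 0 < ε)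
    (t : ℕ) (ht : b ^ 4 / (2 * ε ^ 2) * (1 + Real.log (1 / γ)) ≤ (t : ℝ)) :
    unifM (Fin t → Fin r)
        {ω : Fin t → Fin r |
          ε * (∑ i, x i) ≤
            |(r : ℝ) / t * ∑ i : Fin t, x (ω i) - ∑ i, x i|} ≤
      ENNReal.ofReal γ := by
  classical
  have hb0 : (0:ℝ) < b := lt_of_lt_of_le one_pos hb
  set S : Set (Fin t → Fin r) :=
    {ω : Fin t → Fin r |
      ε * (∑ i, x i) ≤ |(r : ℝ) / t * ∑ i : Fin t, x (ω i) - ∑ i, x i|} with hSdef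
  rcases Nat.eq_zero_or_pos r with hr0 | hr
  · subst hr0
    rcases Nat.eq_zero_or_pos t with ht0 | htpos
    · subst ht0
      -- γ ≥ e > 1 here
      have hpos : (0:ℝ) < b ^ 4 / (2 * ε ^ 2) := by positivity
      have hL : 1 + Real.log (1 / γ) ≤ 0 := by
        by_contra hcon
        push_neg at hcon
        have := mul_pos hpos hcon
        simp only [Nat.cast_zero] at ht
        linarith
      have hγ1 : 1 ≤ γ := by
        rw [one_div, Real.log_inv] at hL
        have hlog : 1 ≤ Real.log γ := by linarith
        have := Real.exp_le_exp.2 hlog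
        rw [Real.exp_log hγ] at this
        have h1 : (1:ℝ) ≤ Real.exp 1 := by
          have := Real.add_one_le_exp 1; linarith
        linarith
      rw [unifM_apply]
      have hScard : (S.toFinite.toFinset.card : ℝ≥0∞) ≤ 1 := by
        have : S.toFinite.toFinset.card ≤ Fintype.card (Fin 0 → Fin 0) :=
          Finset.card_le_univ _
        simp only [Fintype.card_fun, Fintype.card_fin, pow_zero] at this
        exact_mod_cast this
      calc (Fintype.card (Fin 0 → Fin 0) : ℝ≥0∞)⁻¹ * (S.toFinite.toFinset.card : ℝ≥0∞)
          ≤ 1 * 1 := by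
            apply mul_le_mul' _ hScard
            simp [Fintype.card_fun]
      _ = 1 := one_mul 1
      _ ≤ ENNReal.ofReal γ := ENNReal.one_le_ofReal.2 hγ1
    · haveI : IsEmpty (Fin t → Fin 0) := ⟨fun f => (f ⟨0, htpos⟩).elim0⟩
      have hSempty : S = ∅ := Set.eq_empty_of_isEmpty S
      rw [unifM, Measure.smul_apply, hSempty, measure_empty, smul_zero]
      exact zero_le
  · -- r ≥ 1
    have hr' : (0:ℝ) < r := by exact_mod_cast hr
    have hcard : Fintype.card (Fin t → Fin r) = r ^ t := by
      simp [Fintype.card_fun]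
    rw [unifM_apply, hcard]
    have hc : r ^ t ≠ 0 := pow_ne_zero t hr.ne'
    apply transfer hc hγ.le
    push_cast
    set N : ℕ := S.toFinite.toFinset.card with hN
    rcases le_or_gt 1 γ with hγ1 | hγ1
    · have hNle : (N:ℝ) ≤ (r:ℝ) ^ t := by
        have : N ≤ Fintype.card (Fin t → Fin r) := Finset.card_le_univ _
        rw [hcard] at this
        exact_mod_cast this
      have h0 := mul_le_mul_of_nonneg_right hγ1 (pow_pos hr' t).le
      linarith only [h0, hNle]
    · -- γ < 1, so t ≥ 1
      have hLpos : 0 < Real.log (1 / γ) := Real.log_pos (one_lt_one_div hγ hγ1)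
      have htpos : 0 < t := by
        rcases Nat.eq_zero_or_pos t with h0 | h
        · exfalso
          rw [h0, Nat.cast_zero] at ht
          have hpos : (0:ℝ) < b ^ 4 / (2 * ε ^ 2) := by positivity
          have hplus : (0:ℝ) < 1 + Real.log (1/γ) := by linarith only [hLpos]
          have hcontra := mul_pos hpos hplus
          linarith only [ht, hcontra]
        · exact h
      have ht' : (0:ℝ) < t := by exact_mod_cast htpos
      rcases eq_or_lt_of_le hb with hb1 | hb1
      · -- b = 1 : all x i = α, S is empty
        have hx1 : ∀ i, x i = α := by
          intro i
          have h1 := (hx i).1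
          have h2 := (hx i).2
          rw [← hb1] at h1 h2
          simp only [div_one, mul_one] at h1 h2
          exact le_antisymm h2 h1
        have hSempty : S = ∅ := by
          ext ω
          simp only [hSdef, Set.mem_setOf_eq, Set.mem_empty_iff_false, iff_false, not_le]
          have h1 : ∑ i, x i = (r:ℝ) * α := by simp [hx1, mul_comm]
          have h2 : ∑ i : Fin t, x (ω i) = (t:ℝ) * α := by simp [hx1, mul_comm]
          rw [h1, h2]
          have h3 : (r:ℝ) / t * ((t:ℝ) * α) - (r:ℝ) * α = 0 := by
            field_simp
            ring
          rw [h3, abs_zero]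
          exact mul_pos hε (mul_pos hr' hα)
        have : N = 0 := by
          rw [hN, Finset.card_eq_zero, Set.Finite.toFinset_eq_empty]
          exact hSempty
        rw [this]
        have : (0:ℝ) ≤ γ * (r:ℝ)^t := by positivity
        simpa using this
      · -- main case: b > 1
        set Γ : ℝ := ∑ i, x i with hΓdef
        have hΓlb : (r:ℝ) * (α / b) ≤ Γ := by
          rw [hΓdef]
          calc (r:ℝ) * (α / b) = ∑ _i : Fin r, (α / b) := by simp [mul_comm]
          _ ≤ ∑ i, x i := Finset.sum_le_sum (fun i _ => (hx i).1)
        have hΓpos : 0 < Γ := lt_of_lt_of_le (by positivity) hΓlb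
        set μ : ℝ := Γ / r with hμdef
        set u : Fin r → ℝ := fun j => x j - μ with hudef
        have hsumu : ∑ j, u j = 0 := by
          simp only [hudef, Finset.sum_sub_distrib, Finset.sum_const, card_univ,
            Fintype.card_fin, nsmul_eq_mul, hμdef]
          rw [← hΓdef]
          field_simp [hr'.ne']; ring
        set A : ℝ := α / b - μ with hAdef
        set B : ℝ := α * b - μ with hBdef
        have hu : ∀ j, u j ∈ Set.Icc A B := fun j =>
          ⟨sub_le_sub_right (hx j).1 μ, sub_le_sub_right (hx j).2 μ⟩
        set d : ℝ := α * b - α / b with hddef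
        have hdpos : 0 < d := by
          rw [hddef]
          have hbb : (1:ℝ) < b * b := by
            calc (1:ℝ) = 1 * 1 := by norm_num
            _ < b * b := mul_lt_mul'' hb1 hb1 zero_le_one zero_le_one
          have h0 : α / b < α * b := by
            rw [div_lt_iff₀ hb0]
            calc α = α * 1 := (mul_one α).symm
            _ < α * (b*b) := mul_lt_mul_of_pos_left hbb hα
            _ = α * b * b := by ring
          linarith only [h0]
        have hBA : B - A = d := by rw [hAdef, hBdef, hddef]; ring
        set a : ℝ := ε * Γ * t / r with hadef
        have hapos : 0 < a := by rw [hadef]; positivity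
        set s : ℝ := 4 * a / (t * d ^ 2) with hsdef
        have hspos : 0 < s := by rw [hsdef]; positivity
        set E : ℝ := 2 * a ^ 2 / (t * d ^ 2) with hEdef
        have hmgf1 : ∑ j, Real.exp (s * u j) ≤ (r:ℝ) * Real.exp (s ^ 2 * d ^ 2 / 8) := by
          have h0 := mgf_bound hr u A B hu hsumu s
          rwa [hBA] at h0
        have hmgf2 : ∑ j, Real.exp (s * (-(u j))) ≤ (r:ℝ) * Real.exp (s ^ 2 * d ^ 2 / 8) := by
          have hu' : ∀ j, -(u j) ∈ Set.Icc (-B) (-A) := fun j =>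
            ⟨neg_le_neg (hu j).2, neg_le_neg (hu j).1⟩
          have hsum' : ∑ j, -(u j) = 0 := by
            rw [Finset.sum_neg_distrib, hsumu, neg_zero]
          have h0 := mgf_bound hr (fun j => -(u j)) (-B) (-A) hu' hsum' s
          have he : (-A - -B) = d := by rw [hAdef, hBdef, hddef]; ring
          rwa [he] at h0
        set F1 := Finset.univ.filter (fun ω : Fin t → Fin r => a ≤ ∑ i, u (ω i)) with hF1
        set F2 := Finset.univ.filter
          (fun ω : Fin t → Fin r => a ≤ ∑ i, (fun j => -(u j)) (ω i)) with hF2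
        have hcount1 : (F1.card : ℝ) * Real.exp (s * a)
            ≤ ((r:ℝ) * Real.exp (s^2*d^2/8)) ^ t := by
          calc (F1.card : ℝ) * Real.exp (s*a) ≤ (∑ j, Real.exp (s * u j))^t :=
                chernoff_count u a s hspos.le
          _ ≤ _ := pow_le_pow_left₀ (Finset.sum_nonneg fun j _ => (Real.exp_pos _).le) hmgf1 t
        have hcount2 : (F2.card : ℝ) * Real.exp (s * a)
            ≤ ((r:ℝ) * Real.exp (s^2*d^2/8)) ^ t := by
          calc (F2.card : ℝ) * Real.exp (s*a)
              ≤ (∑ j, Real.exp (s * (fun j => -(u j)) j))^t :=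
                chernoff_count (fun j => -(u j)) a s hspos.le
          _ ≤ _ := pow_le_pow_left₀ (Finset.sum_nonneg fun j _ => (Real.exp_pos _).le) hmgf2 t
        have hrt : (0:ℝ) < (r:ℝ)^t := pow_pos hr' t
        have hexp : (t:ℝ) * (s^2*d^2/8) - s * a = -E := by
          rw [hsdef, hEdef]
          field_simp [hr'.ne', ht'.ne', hdpos.ne']
          ring
        have hrw : ((r:ℝ) * Real.exp (s^2*d^2/8)) ^ t
            = (r:ℝ)^t * Real.exp (-E) * Real.exp (s*a) := by
          rw [mul_pow, ← Real.exp_nat_mul, mul_assoc, ← Real.exp_add]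
          congr 1
          congr 1
          linarith only [hexp]
        have hkey : ∀ F : Finset (Fin t → Fin r),
            (F.card : ℝ) * Real.exp (s * a) ≤ ((r:ℝ) * Real.exp (s^2*d^2/8)) ^ t →
            (F.card : ℝ) ≤ (r:ℝ)^t * Real.exp (-E) := by
          intro F hF
          rw [hrw] at hF
          exact le_of_mul_le_mul_right hF (Real.exp_pos _)
        have hsub : S.toFinite.toFinset ⊆ F1 ∪ F2 := by
          intro ω hω
          rw [Set.Finite.mem_toFinset] at hω
          have hω' : ε * Γ ≤ |(r:ℝ)/t * ∑ i : Fin t, x (ω i) - Γ| := hω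
          have hsx : ∑ i : Fin t, u (ω i) = (∑ i : Fin t, x (ω i)) - t * μ := by
            simp [hudef, Finset.sum_sub_distrib, mul_comm]
          have heq : (r:ℝ)/t * ∑ i : Fin t, x (ω i) - Γ
              = (r:ℝ)/t * ∑ i : Fin t, u (ω i) := by
            rw [hsx, hμdef]
            field_simp [hr'.ne', ht'.ne', hdpos.ne']
          rw [heq, abs_mul, abs_of_pos (by positivity : (0:ℝ) < (r:ℝ)/t)] at hω'
          have habs : a ≤ |∑ i : Fin t, u (ω i)| := by
            have h5 := mul_le_mul_of_nonneg_right hω' ht'.le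
            have h6 : (r:ℝ)/t * |∑ i : Fin t, u (ω i)| * t
                = |∑ i : Fin t, u (ω i)| * r := by
              field_simp [ht'.ne']
            rw [h6] at h5
            rw [hadef, div_le_iff₀ hr']
            linarith only [h5]
          rcases abs_cases (∑ i : Fin t, u (ω i)) with ⟨he, _⟩ | ⟨he, _⟩
          · apply Finset.mem_union_left
            rw [hF1, Finset.mem_filter]
            rw [he] at habs
            exact ⟨Finset.mem_univ _, habs⟩
          · apply Finset.mem_union_right
            rw [hF2, Finset.mem_filter]
            rw [he] at habs
            refine ⟨Finset.mem_univ _, ?_⟩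
            simpa [Finset.sum_neg_distrib] using habs
        have hNle : (N:ℝ) ≤ (F1.card : ℝ) + (F2.card : ℝ) := by
          have h7 : N ≤ (F1 ∪ F2).card := Finset.card_le_card hsub
          have h8 : (F1 ∪ F2).card ≤ F1.card + F2.card := Finset.card_union_le _ _
          exact_mod_cast le_trans h7 h8
        have hN2 : (N:ℝ) ≤ 2 * ((r:ℝ)^t * Real.exp (-E)) := by
          have hk1 := hkey F1 hcount1
          have hk2 := hkey F2 hcount2
          linarith only [hNle, hk1, hk2]
        have hb2pos : (0:ℝ) < b^2 - 1 := sub_pos.2 (one_lt_pow₀ hb1 two_ne_zero)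
        have he_eq : E = 2*ε^2*Γ^2*t/((r:ℝ)^2*d^2) := by
          rw [hEdef, hadef]
          field_simp [hr'.ne', ht'.ne', hdpos.ne']
        have h1 : 1 + Real.log (1/γ) ≤ 2*ε^2*(t:ℝ)/b^4 := by
          have hpos : (0:ℝ) < 2*ε^2/b^4 := by positivity
          have h9 := mul_le_mul_of_nonneg_right ht hpos.le
          have h10 : b^4/(2*ε^2)*(1+Real.log (1/γ))*(2*ε^2/b^4) = 1+Real.log (1/γ) := by
            field_simp [hb0.ne', hε.ne']
          rw [h10] at h9
          calc 1+Real.log (1/γ) ≤ (t:ℝ)*(2*ε^2/b^4) := h9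
          _ = 2*ε^2*(t:ℝ)/b^4 := by ring
        have h2 : 2*ε^2*(t:ℝ)/b^4 ≤ 2*ε^2*(t:ℝ)/(b^2-1)^2 := by
          apply div_le_div_of_nonneg_left (by positivity) (by positivity)
          have hbsq : (1:ℝ) < b^2 := one_lt_pow₀ hb1 two_ne_zero
          linarith only [hbsq]
        have h3 : 2*ε^2*(t:ℝ)/(b^2-1)^2 ≤ 2*ε^2*Γ^2*(t:ℝ)/((r:ℝ)^2*d^2) := by
          have h4 : (r:ℝ)*d ≤ (b^2-1)*Γ := by
            have h5 : (b^2-1)*((r:ℝ)*(α/b)) = (r:ℝ)*d := by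
              rw [hddef]; field_simp [hb0.ne']
            have h6 := mul_le_mul_of_nonneg_left hΓlb (le_of_lt hb2pos)
            rw [h5] at h6
            exact h6
          have h7 : ((r:ℝ)*d)^2 ≤ ((b^2-1)*Γ)^2 := pow_le_pow_left₀ (by positivity) h4 2
          rw [div_le_div_iff₀ (by positivity) (by positivity)]
          have h8 : (0:ℝ) ≤ 2*ε^2*(t:ℝ) := by positivity
          have h9 := mul_le_mul_of_nonneg_left h7 h8
          linarith only [h9]
        have hE1 : 1 + Real.log (1/γ) ≤ E := by rw [he_eq]; linarith only [h1, h2, h3]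
        have h15 : Real.exp (-E) ≤ Real.exp (-1) * γ := by
          have h11 : Real.exp (-E) ≤ Real.exp (-(1+Real.log (1/γ))) :=
            Real.exp_le_exp.2 (by linarith)
          have h12 : Real.exp (-(1+Real.log (1/γ))) = Real.exp (-1) * γ := by
            rw [one_div, Real.log_inv]
            rw [show -(1 + -Real.log γ) = -1 + Real.log γ by ring]
            rw [Real.exp_add, Real.exp_log hγ]
          exact h12 ▸ h11
        have h16 : 2 * Real.exp (-1) ≤ 1 := by
          have h13 : Real.exp (-1) * Real.exp 1 = 1 := by rw [← Real.exp_add]; norm_num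
          have h14 : (2:ℝ) ≤ Real.exp 1 := by
            have h := Real.add_one_le_exp 1
            linarith only [h]
          have h18 := mul_le_mul_of_nonneg_left h14 (Real.exp_pos (-1)).le
          rw [h13] at h18
          linarith only [h18]
        calc (N:ℝ) ≤ 2 * ((r:ℝ)^t * Real.exp (-E)) := hN2
        _ = (2 * Real.exp (-E)) * (r:ℝ)^t := by ring
        _ ≤ ((2 * Real.exp (-1)) * γ) * (r:ℝ)^t := by
            apply mul_le_mul_of_nonneg_right _ hrt.le
            linarith only [h15]
        _ ≤ (1 * γ) * (r:ℝ)^t := by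
            apply mul_le_mul_of_nonneg_right _ hrt.le
            have h17 := mul_le_mul_of_nonneg_right h16 hγ.le
            linarith only [h17]
        _ = γ * (r:ℝ)^t := by ring
end
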